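/- Let ψ₂(x) = (x−1)/(x+1). For probability densities s, q, q' with respect to μ, ∫ ψ₂²(√(q'/q)) s dμ ≤ 3√2 [h²(s,q) + h²(s,q')]. -/
import Mathlib


open MeasureTheory

/-- The squared Hellinger distance between the probability measures with
densities `a` and `b` with respect to `μ`. -/
noncomputable def H2 {α : Type*} [MeasurableSpace α] (μ : Measure α) (a b : α → ℝ) : ℝ :=
  (1 / 2) * ∫ x, (Real.sqrt (a x) - Real.sqrt (b x)) ^ 2 ∂μ

/-- `ψ₂(√(q'/q))` evaluated with the conventions `0/0 = 1` (giving `ψ₂(1) = 0`)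
and `a/0 = +∞` for `a > 0` (giving `ψ₂(+∞) = 1`), where `ψ₂(x) = (x-1)/(x+1)`. -/
noncomputable def psi2Ratio {α : Type*} (q q' : α → ℝ) (x : α) : ℝ :=
  if q x = 0 then (if q' x = 0 then 0 else 1)
  else (Real.sqrt (q' x / q x) - 1) / (Real.sqrt (q' x / q x) + 1)

lemma psi2Ratio_eq' {α : Type*} (q q' : α → ℝ) (hq0 : ∀ x, 0 ≤ q x) (hq'0 : ∀ x, 0 ≤ q' x)
    (x : α) :
    psi2Ratio q q' x
      = (Real.sqrt (q' x) - Real.sqrt (q x)) / (Real.sqrt (q' x) + Real.sqrt (q x)) := by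
  unfold psi2Ratio
  by_cases h : q x = 0
  · rw [if_pos h, h, Real.sqrt_zero]
    by_cases h' : q' x = 0
    · simp [h']
    · have hpos : 0 < Real.sqrt (q' x) := Real.sqrt_pos.2 ((hq'0 x).lt_of_ne (Ne.symm h'))
      rw [if_neg h']
      rw [sub_zero, add_zero, div_self hpos.ne']
  · have hqpos : 0 < q x := (hq0 x).lt_of_ne (Ne.symm h)
    have hsq : 0 < Real.sqrt (q x) := Real.sqrt_pos.2 hqpos
    have hsq' : 0 ≤ Real.sqrt (q' x) := Real.sqrt_nonneg _
    have hden : Real.sqrt (q' x) / Real.sqrt (q x) + 1 ≠ 0 := by positivity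
    have hden2 : Real.sqrt (q' x) + Real.sqrt (q x) ≠ 0 := by positivity
    rw [if_neg h, Real.sqrt_div (hq'0 x)]
    field_simp

lemma key_ineq (a b c : ℝ) (hb : 0 ≤ b) (hc : 0 ≤ c) :
    ((c - b) / (c + b))^2 * a^2 ≤ (a - b)^2 + (a - c)^2 := by
  rcases eq_or_lt_of_le (add_nonneg hc hb) with h | h
  · have hb0 : b = 0 := by linarith
    have hc0 : c = 0 := by linarith
    simp [hb0, hc0]
    positivity
  · rw [div_pow, div_mul_eq_mul_div, div_le_iff₀ (by positivity)]
    nlinarith [mul_nonneg (sq_nonneg (c-b)) (sq_nonneg (a-b-c)),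
      mul_nonneg (mul_nonneg hb hc) (sq_nonneg (2*a-b-c))]

theorem stmt13 {α : Type*} [MeasurableSpace α] (μ : Measure α) (s q q' : α → ℝ)
    (hs : Measurable s) (hq : Measurable q) (hq' : Measurable q')
    (hs0 : ∀ x, 0 ≤ s x) (hq0 : ∀ x, 0 ≤ q x) (hq'0 : ∀ x, 0 ≤ q' x)
    (hsint : ∫ x, s x ∂μ = 1) (hqint : ∫ x, q x ∂μ = 1) (hq'int : ∫ x, q' x ∂μ = 1) :
    ∫ x, (psi2Ratio q q' x) ^ 2 * s x ∂μ
      ≤ 3 * Real.sqrt 2 * (H2 μ s q + H2 μ s q') := by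
  -- integrability of s, q, q'
  have hsInt : Integrable s μ := by
    by_contra h; rw [integral_undef h] at hsint; norm_num at hsint
  have hqInt : Integrable q μ := by
    by_contra h; rw [integral_undef h] at hqint; norm_num at hqint
  have hq'Int : Integrable q' μ := by
    by_contra h; rw [integral_undef h] at hq'int; norm_num at hq'int
  have hmsq : Measurable fun x => Real.sqrt (s x) :=
    Real.continuous_sqrt.measurable.comp hs
  have hmqq : Measurable fun x => Real.sqrt (q x) :=
    Real.continuous_sqrt.measurable.comp hq
  have hmqq' : Measurable fun x => Real.sqrt (q' x) :=
    Real.continuous_sqrt.measurable.comp hq'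
  -- integrability of the squared differences
  have hI1 : Integrable (fun x => (Real.sqrt (s x) - Real.sqrt (q x)) ^ 2) μ := by
    refine Integrable.mono' ((hsInt.add hqInt).const_mul 2)
      ((hmsq.sub hmqq).pow_const 2).aestronglyMeasurable ?_
    filter_upwards with x
    rw [Real.norm_eq_abs, abs_of_nonneg (sq_nonneg _)]
    simp only [Pi.add_apply]
    have h1 : Real.sqrt (s x) ^ 2 = s x := Real.sq_sqrt (hs0 x)
    have h2 : Real.sqrt (q x) ^ 2 = q x := Real.sq_sqrt (hq0 x)
    nlinarith [sq_nonneg (Real.sqrt (s x) + Real.sqrt (q x))]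
  have hI2 : Integrable (fun x => (Real.sqrt (s x) - Real.sqrt (q' x)) ^ 2) μ := by
    refine Integrable.mono' ((hsInt.add hq'Int).const_mul 2)
      ((hmsq.sub hmqq').pow_const 2).aestronglyMeasurable ?_
    filter_upwards with x
    rw [Real.norm_eq_abs, abs_of_nonneg (sq_nonneg _)]
    simp only [Pi.add_apply]
    have h1 : Real.sqrt (s x) ^ 2 = s x := Real.sq_sqrt (hs0 x)
    have h2 : Real.sqrt (q' x) ^ 2 = q' x := Real.sq_sqrt (hq'0 x)
    nlinarith [sq_nonneg (Real.sqrt (s x) + Real.sqrt (q' x))]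
  -- pointwise bound
  have hpt : ∀ x, (psi2Ratio q q' x) ^ 2 * s x
      ≤ (Real.sqrt (s x) - Real.sqrt (q x)) ^ 2
        + (Real.sqrt (s x) - Real.sqrt (q' x)) ^ 2 := by
    intro x
    rw [psi2Ratio_eq' q q' hq0 hq'0 x]
    have := key_ineq (Real.sqrt (s x)) (Real.sqrt (q x)) (Real.sqrt (q' x))
      (Real.sqrt_nonneg _) (Real.sqrt_nonneg _)
    rwa [Real.sq_sqrt (hs0 x)] at this
  -- bound the integral
  have hmono : ∫ x, (psi2Ratio q q' x) ^ 2 * s x ∂μ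
      ≤ ∫ x, ((Real.sqrt (s x) - Real.sqrt (q x)) ^ 2
        + (Real.sqrt (s x) - Real.sqrt (q' x)) ^ 2) ∂μ := by
    refine integral_mono_of_nonneg ?_ (hI1.add hI2) ?_
    · filter_upwards with x
      exact mul_nonneg (sq_nonneg _) (hs0 x)
    · filter_upwards with x using hpt x
  rw [integral_add hI1 hI2] at hmono
  have hH1 : (0:ℝ) ≤ ∫ x, (Real.sqrt (s x) - Real.sqrt (q x)) ^ 2 ∂μ :=
    integral_nonneg fun x => sq_nonneg _
  have hH2 : (0:ℝ) ≤ ∫ x, (Real.sqrt (s x) - Real.sqrt (q' x)) ^ 2 ∂μ :=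
    integral_nonneg fun x => sq_nonneg _
  have hs2 : Real.sqrt 2 ^ 2 = 2 := Real.sq_sqrt (by norm_num)
  have hs2n : (0:ℝ) ≤ Real.sqrt 2 := Real.sqrt_nonneg 2
  unfold H2
  nlinarith [hmono, hH1, hH2]
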